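/- arXiv:2109.06650 — 3 statements merged into one kernel-verified Lean document; each statement's English description precedes it below -/
import Mathlib

section
/- Let m ≥ 1 be an integer and let B, A₁, A₂ be positive real constants and α, β, γ nonnegative reals. Define h(r) = B(1+r)^α + (4√m+3)·A₁²·(1+r)^{2β} + 2A₂·(1+r)^γ and y(r) = 1/r + √(h(r)) for r > 0. Then y is differentiable on (0,∞), and for every r > 0 its derivative y′ satisfies y′(r) + y(r)² − √2·A₁·(1+r)^β·y(r) ≥ (1/2)·B·(1+r)^α + (2√m + 1/2)·A₁²·(1+r)^{2β} + A₂·(1+r)^γ. -/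
private lemma riccati_sq_aux (a c Q s : ℝ) (ha : 0 < a) (hc : 0 < c) (hQ : 0 ≤ Q)
    (hs : 0 ≤ s) :
    2 * (Q * (a + (4*s+3)*Q + 2*c)) ≤ (a + (4*s+3)*Q + 2*c - (1/2*a + (2*s+1/2)*Q + c))^2 := by
  nlinarith [mul_nonneg ha.le hQ, mul_nonneg hc.le hQ, mul_nonneg (mul_nonneg hs ha.le) hQ,
    mul_nonneg (mul_nonneg hs hc.le) hQ, sq_nonneg (s*Q), mul_nonneg hs (sq_nonneg Q),
    sq_nonneg Q, sq_nonneg (a+c), sq_nonneg a, sq_nonneg c, mul_nonneg ha.le hc.le]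

/-- The comparison function `y(r) = 1/r + √(h(r))`, with
`h(r) = B(1+r)^α + (4√m+3)A₁²(1+r)^{2β} + 2A₂(1+r)^γ`, is differentiable on `(0,∞)` and
satisfies the scalar Riccati supersolution inequality
`y' + y² − √2·A₁·(1+r)^β·y ≥ (1/2)B(1+r)^α + (2√m + 1/2)A₁²(1+r)^{2β} + A₂(1+r)^γ`. -/
theorem tamed_exhaustion_scalar_riccati_supersolution
    (m : ℕ) (hm : 1 ≤ m) (B A₁ A₂ α β γ : ℝ)
    (hB : 0 < B) (hA₁ : 0 < A₁) (hA₂ : 0 < A₂)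
    (hα : 0 ≤ α) (hβ : 0 ≤ β) (hγ : 0 ≤ γ)
    (h y : ℝ → ℝ)
    (hh : ∀ r : ℝ, h r =
      B * (1 + r) ^ α + (4 * Real.sqrt m + 3) * A₁ ^ 2 * (1 + r) ^ (2 * β)
        + 2 * A₂ * (1 + r) ^ γ)
    (hy : ∀ r : ℝ, y r = 1 / r + Real.sqrt (h r)) :
    (∀ r ∈ Set.Ioi (0 : ℝ), DifferentiableAt ℝ y r) ∧
    (∀ r : ℝ, 0 < r →
      deriv y r + (y r) ^ 2 - Real.sqrt 2 * A₁ * (1 + r) ^ β * y r ≥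
        (1 / 2) * B * (1 + r) ^ α + (2 * Real.sqrt m + 1 / 2) * A₁ ^ 2 * (1 + r) ^ (2 * β)
          + A₂ * (1 + r) ^ γ) := by
  have sm0 : (0:ℝ) ≤ Real.sqrt m := Real.sqrt_nonneg _
  have hsm : (1:ℝ) ≤ Real.sqrt m := by
    rw [show (1:ℝ) = Real.sqrt 1 from Real.sqrt_one.symm]
    exact Real.sqrt_le_sqrt (by exact_mod_cast hm)
  have hpos : ∀ r : ℝ, 0 < r → 0 < h r := by
    intro r hr
    have hp : (0:ℝ) < 1 + r := by linarith
    rw [hh r]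
    have h1 := Real.rpow_pos_of_pos hp α
    have h2 := Real.rpow_pos_of_pos hp (2*β)
    have h3 := Real.rpow_pos_of_pos hp γ
    have h4 : (0:ℝ) < 4 * Real.sqrt m + 3 := by linarith
    positivity
  have key : ∀ r : ℝ, 0 < r → HasDerivAt y
      (-(r^2)⁻¹ + (B * (α * (1+r)^(α-1)) + (4*Real.sqrt m+3)*A₁^2 * (2*β*(1+r)^(2*β-1))
        + 2*A₂*(γ*(1+r)^(γ-1))) / (2 * Real.sqrt (h r))) r := by
    intro r hr
    have hp : (0:ℝ) < 1 + r := by linarith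
    have hone : HasDerivAt (fun s : ℝ => 1 + s) 1 r := by
      simpa using (hasDerivAt_id r).const_add (1:ℝ)
    have hpow : ∀ p : ℝ, HasDerivAt (fun s : ℝ => (1+s)^p) (p * (1+r)^(p-1)) r := by
      intro p
      have := (Real.hasDerivAt_rpow_const (x := 1+r) (p := p) (Or.inl hp.ne')).comp r hone
      simpa [Function.comp_def] using this
    have hhd : HasDerivAt h (B * (α * (1+r)^(α-1)) + (4*Real.sqrt m+3)*A₁^2 * (2*β*(1+r)^(2*β-1))
        + 2*A₂*(γ*(1+r)^(γ-1))) r := by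
      have H := (((hpow α).const_mul B).add
        ((hpow (2*β)).const_mul ((4*Real.sqrt m+3)*A₁^2))).add ((hpow γ).const_mul (2*A₂))
      exact H.congr_of_eventuallyEq (Filter.Eventually.of_forall fun x => hh x)
    have hs : HasDerivAt (fun x => Real.sqrt (h x))
        ((B * (α * (1+r)^(α-1)) + (4*Real.sqrt m+3)*A₁^2 * (2*β*(1+r)^(2*β-1))
          + 2*A₂*(γ*(1+r)^(γ-1))) / (2 * Real.sqrt (h r))) r := hhd.sqrt (hpos r hr).ne'
    have hinv : HasDerivAt (fun x : ℝ => x⁻¹) (-(r^2)⁻¹) r := hasDerivAt_inv hr.ne'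
    exact (hinv.add hs).congr_of_eventuallyEq
      (Filter.Eventually.of_forall fun x => by rw [hy x, one_div]; rfl)
  constructor
  · exact fun r hr => (key r hr).differentiableAt
  · intro r hr
    have hp : (0:ℝ) < 1 + r := by linarith
    rw [(key r hr).deriv, hy r]
    set X := Real.sqrt (h r) with hX
    have hXpos : 0 < X := Real.sqrt_pos.2 (hpos r hr)
    have hX2 : X ^ 2 = h r := Real.sq_sqrt (hpos r hr).le
    have hpa : (0:ℝ) < (1+r)^α := Real.rpow_pos_of_pos hp _
    have hpb : (0:ℝ) < (1+r)^β := Real.rpow_pos_of_pos hp _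
    have hpg : (0:ℝ) < (1+r)^γ := Real.rpow_pos_of_pos hp _
    have hpb2 : (1+r)^(2*β) = ((1+r)^β)^2 := by
      rw [two_mul, Real.rpow_add hp, sq]
    have hr2 : (Real.sqrt 2)^2 = 2 := Real.sq_sqrt (by norm_num)
    have hr2n : (0:ℝ) ≤ Real.sqrt 2 := Real.sqrt_nonneg _
    have hX2' : X ^ 2 = B * (1+r)^α + (4*Real.sqrt m+3)*A₁^2*((1+r)^β)^2
        + 2*A₂*(1+r)^γ := by rw [hX2, hh r, hpb2]
    -- derivative term is nonnegative
    have hd0 : 0 ≤ B * (α * (1+r)^(α-1)) + (4*Real.sqrt m+3)*A₁^2 * (2*β*(1+r)^(2*β-1))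
        + 2*A₂*(γ*(1+r)^(γ-1)) := by
      have h1 : (0:ℝ) ≤ (1+r)^(α-1) := (Real.rpow_pos_of_pos hp _).le
      have h2 : (0:ℝ) ≤ (1+r)^(2*β-1) := (Real.rpow_pos_of_pos hp _).le
      have h3 : (0:ℝ) ≤ (1+r)^(γ-1) := (Real.rpow_pos_of_pos hp _).le
      have h4 : (0:ℝ) ≤ 4*Real.sqrt m + 3 := by linarith
      have := sq_nonneg A₁
      positivity
    have hDiv : 0 ≤ (B * (α * (1+r)^(α-1)) + (4*Real.sqrt m+3)*A₁^2 * (2*β*(1+r)^(2*β-1))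
        + 2*A₂*(γ*(1+r)^(γ-1))) / (2 * X) := div_nonneg hd0 (by positivity)
    -- 2X dominates √2·A₁·(1+r)^β
    have hE0 : (0:ℝ) ≤ Real.sqrt 2 * A₁ * (1+r)^β := by positivity
    have hsle : Real.sqrt 2 * A₁ * (1+r)^β ≤ 2 * X := by
      have hq : (Real.sqrt 2 * A₁ * (1+r)^β)^2 ≤ (2*X)^2 := by
        have e1 : (Real.sqrt 2 * A₁ * (1+r)^β)^2
            = (Real.sqrt 2)^2 * (A₁ * (1+r)^β)^2 := by ring
        have e2 : (2*X)^2 = 4 * X^2 := by ring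
        rw [e1, hr2, e2, hX2']
        linarith [mul_pos hB hpa, mul_pos hA₂ hpg, sq_nonneg (A₁ * (1+r)^β),
          mul_nonneg sm0 (sq_nonneg (A₁ * (1+r)^β))]
      exact (pow_le_pow_iff_left₀ hE0 (by positivity) two_ne_zero).1 hq
    -- main Riccati estimate
    have hRHS0 : 0 ≤ X^2 - ((1/2) * B * (1+r)^α
        + (2*Real.sqrt m + 1/2) * A₁^2 * (1+r)^(2*β) + A₂ * (1+r)^γ) := by
      rw [hX2', hpb2]
      linarith [mul_pos hB hpa, mul_pos hA₂ hpg, sq_nonneg (A₁ * (1+r)^β),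
        mul_nonneg sm0 (sq_nonneg (A₁ * (1+r)^β))]
    have hEX0 : 0 ≤ Real.sqrt 2 * A₁ * (1+r)^β * X := by positivity
    have hmain : Real.sqrt 2 * A₁ * (1+r)^β * X ≤ X^2 - ((1/2) * B * (1+r)^α
        + (2*Real.sqrt m + 1/2) * A₁^2 * (1+r)^(2*β) + A₂ * (1+r)^γ) := by
      have hq : (Real.sqrt 2 * A₁ * (1+r)^β * X)^2 ≤ (X^2 - ((1/2) * B * (1+r)^α
          + (2*Real.sqrt m + 1/2) * A₁^2 * (1+r)^(2*β) + A₂ * (1+r)^γ))^2 := by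
        have e1 : (Real.sqrt 2 * A₁ * (1+r)^β * X)^2
            = (Real.sqrt 2)^2 * (A₁^2 * ((1+r)^β)^2 * X^2) := by ring
        rw [e1, hr2, hpb2, hX2']
        have := riccati_sq_aux (B * (1+r)^α) (A₂ * (1+r)^γ) (A₁^2 * ((1+r)^β)^2)
          (Real.sqrt m) (mul_pos hB hpa) (mul_pos hA₂ hpg) (by positivity) sm0
        linarith [this]
      exact (pow_le_pow_iff_left₀ hEX0 hRHS0 two_ne_zero).1 hq
    have hC : 0 ≤ (2*X - Real.sqrt 2 * A₁ * (1+r)^β) * (1/r) :=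
      mul_nonneg (by linarith) (by positivity)
    have hexp : (1/r + X)^2 = (r^2)⁻¹ + 2*X*(1/r) + X^2 := by
      field_simp
      ring
    linarith [hDiv, hC, hmain, hexp]
end

section
/- Let m ≥ 1 be an integer and let B, A₁, A₂ be positive real constants and α, β, γ nonnegative reals. Define h(r) = B(1+r)^α + (4√m+3)·A₁²·(1+r)^{2β} + 2A₂·(1+r)^γ and y(r) = 1/r + √(h(r)) for r > 0. Fix r > 0 and let A be a complex m×m matrix such that |u* (A + A*) u| ≤ √2·A₁·(1+r)^β for every unit vector u ∈ ℂ^m, where A* denotes the conjugate transpose. Then the Hermitian matrix y′(r)·I + y(r)²·I + y(r)·(A + A*) − ((1/2)·B·(1+r)^α + (2√m + 1/2)·A₁²·(1+r)^{2β} + A₂·(1+r)^γ)·I is positive semidefinite, where I is the m×m identity matrix and y′ is the derivative of y. -/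
open Matrix ComplexOrder

private theorem aux_psd (m : ℕ) (H : Matrix (Fin m) (Fin m) ℂ) (hH : H.IsHermitian)
    (s t K : ℝ) (ht : 0 ≤ t) (hK : 0 ≤ K) (hs : t * K ≤ s)
    (hbound : ∀ u : Fin m → ℂ, star u ⬝ᵥ u = 1 → ‖star u ⬝ᵥ (H *ᵥ u)‖ ≤ K) :
    Matrix.PosSemidef ((s : ℂ) • (1 : Matrix (Fin m) (Fin m) ℂ) + (t : ℂ) • H) := by
  have herm : ((s : ℂ) • (1 : Matrix (Fin m) (Fin m) ℂ) + (t : ℂ) • H).IsHermitian := by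
    unfold Matrix.IsHermitian
    simp [Matrix.conjTranspose_smul, hH.eq, Complex.star_def, Matrix.conjTranspose_one]
  refine Matrix.PosSemidef.of_dotProduct_mulVec_nonneg herm fun x => ?_
  by_cases hx : x = 0
  · simp [hx]
  set nr : ℝ := ∑ i, Complex.normSq (x i) with hnr
  have hnr0 : 0 < nr := by
    rcases Function.ne_iff.mp hx with ⟨i, hi⟩
    exact Finset.sum_pos' (fun i _ => Complex.normSq_nonneg _)
      ⟨i, Finset.mem_univ i, Complex.normSq_pos.mpr hi⟩
  have hdot : star x ⬝ᵥ x = (nr : ℂ) := by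
    simp [dotProduct, hnr, Pi.star_apply, Complex.star_def, Complex.normSq_eq_conj_mul_self]
  set q : ℂ := star x ⬝ᵥ (H *ᵥ x) with hq
  have hqstar : star q = q := by
    rw [hq, ← Matrix.star_dotProduct, Matrix.star_mulVec, hH.eq]
    exact (Matrix.dotProduct_mulVec _ _ _).symm
  have hqreal : (q.re : ℂ) = q := Complex.conj_eq_iff_re.mp hqstar
  have hqbound : ‖q‖ ≤ K * nr := by
    set c : ℂ := (((Real.sqrt nr)⁻¹ : ℝ) : ℂ) with hc
    set v : Fin m → ℂ := c • x with hv
    have hsq : (Real.sqrt nr) * (Real.sqrt nr) = nr := Real.mul_self_sqrt hnr0.le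
    have hvu : star v ⬝ᵥ v = 1 := by
      rw [hv, star_smul, smul_dotProduct, dotProduct_smul, hdot, hc]
      simp only [smul_eq_mul, Complex.star_def, ← Complex.ofReal_inv, Complex.conj_ofReal]
      push_cast
      rw [← hsq]
      have hne : Real.sqrt nr ≠ 0 := by positivity
      norm_cast
      field_simp
      rw [Real.sqrt_sq (Real.sqrt_nonneg _)]
    have hb := hbound v hvu
    have hqv : star v ⬝ᵥ (H *ᵥ v) = c * c * q := by
      rw [hv, star_smul, smul_dotProduct, Matrix.mulVec_smul, dotProduct_smul, hq]
      simp only [smul_eq_mul, Complex.star_def, hc, Complex.conj_ofReal]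
      ring
    rw [hqv] at hb
    have habs : ‖c * c * q‖ = nr⁻¹ * ‖q‖ := by
      rw [norm_mul, norm_mul, hc]
      simp only [Complex.norm_real, Real.norm_eq_abs]
      rw [abs_of_nonneg (by positivity), ← mul_inv, hsq]
    rw [habs] at hb
    calc ‖q‖ = nr * (nr⁻¹ * ‖q‖) := by field_simp
    _ ≤ nr * K := by exact mul_le_mul_of_nonneg_left hb hnr0.le
    _ = K * nr := mul_comm _ _
  have hqre : -(K * nr) ≤ q.re := by
    have := abs_le.mp ((Complex.abs_re_le_norm q).trans hqbound |>.trans_eq rfl : |q.re| ≤ K * nr)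
    exact this.1
  have hform : star x ⬝ᵥ (((s : ℂ) • (1 : Matrix (Fin m) (Fin m) ℂ) + (t : ℂ) • H) *ᵥ x)
      = ((s * nr + t * q.re : ℝ) : ℂ) := by
    rw [Matrix.add_mulVec, Matrix.smul_mulVec, Matrix.smul_mulVec,
      Matrix.one_mulVec, dotProduct_add, dotProduct_smul, dotProduct_smul,
      hdot, ← hq, ← hqreal]
    simp only [smul_eq_mul]
    push_cast
    simp
  rw [hform]
  rw [Complex.zero_le_real]
  nlinarith [hnr0.le, mul_le_mul_of_nonneg_left hqre ht]

private theorem key_ineq (m : ℕ) (hm : 1 ≤ m) (B A₁ A₂ α β γ : ℝ)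
    (hB : 0 < B) (hA₁ : 0 < A₁) (hA₂ : 0 < A₂)
    (hα : 0 ≤ α) (hβ : 0 ≤ β) (hγ : 0 ≤ γ)
    (h y : ℝ → ℝ)
    (hh : ∀ r : ℝ, h r =
      B * (1 + r) ^ α + (4 * Real.sqrt m + 3) * A₁ ^ 2 * (1 + r) ^ (2 * β)
        + 2 * A₂ * (1 + r) ^ γ)
    (hy : ∀ r : ℝ, y r = 1 / r + Real.sqrt (h r))
    (r : ℝ) (hr : 0 < r) :
    Real.sqrt 2 * A₁ * (1 + r) ^ β * y r ≤
      deriv y r + (y r) ^ 2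
        - ((1 / 2) * B * (1 + r) ^ α + (2 * Real.sqrt m + 1 / 2) * A₁ ^ 2 * (1 + r) ^ (2 * β)
            + A₂ * (1 + r) ^ γ) := by
  have h1r : (0:ℝ) < 1 + r := by linarith
  set Pa := (1 + r) ^ α with hPa
  set P := (1 + r) ^ β with hP
  set P2 := (1 + r) ^ (2 * β) with hP2d
  set Pg := (1 + r) ^ γ with hPg
  have hPa0 : 0 < Pa := Real.rpow_pos_of_pos h1r _
  have hP0 : 0 < P := Real.rpow_pos_of_pos h1r _
  have hP20 : 0 < P2 := Real.rpow_pos_of_pos h1r _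
  have hPg0 : 0 < Pg := Real.rpow_pos_of_pos h1r _
  have hP2 : P2 = P ^ 2 := by
    rw [hP2d, hP, ← Real.rpow_natCast ((1+r)^β) 2, ← Real.rpow_mul h1r.le]
    norm_num
    ring_nf
  have hsm : (1:ℝ) ≤ Real.sqrt m := by
    rw [show (1:ℝ) = Real.sqrt 1 by simp]
    exact Real.sqrt_le_sqrt (by exact_mod_cast hm)
  -- positivity of h r
  have hhr : h r = B * Pa + (4 * Real.sqrt m + 3) * A₁ ^ 2 * P2 + 2 * A₂ * Pg := hh r
  have hhpos : 0 < h r := by rw [hhr]; positivity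
  -- derivative of h
  set D : ℝ := B * (α * (1 + r) ^ (α - 1)) +
      (4 * Real.sqrt m + 3) * A₁ ^ 2 * ((2 * β) * (1 + r) ^ (2 * β - 1)) +
      2 * A₂ * (γ * (1 + r) ^ (γ - 1)) with hD
  have hd1 : HasDerivAt (fun x : ℝ => 1 + x) 1 r := by
    simpa using (hasDerivAt_id r).const_add (1:ℝ)
  have hdh : HasDerivAt h D r := by
    have t1 := (hd1.rpow_const (p := α) (Or.inl h1r.ne')).const_mul B
    have t2 := (hd1.rpow_const (p := 2 * β) (Or.inl h1r.ne')).const_mul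
      ((4 * Real.sqrt m + 3) * A₁ ^ 2)
    have t3 := (hd1.rpow_const (p := γ) (Or.inl h1r.ne')).const_mul (2 * A₂)
    have hsum := (t1.add t2).add t3
    have hfun : h = fun x : ℝ => B * (1 + x) ^ α + (4 * Real.sqrt m + 3) * A₁ ^ 2 * (1 + x) ^ (2 * β)
        + 2 * A₂ * (1 + x) ^ γ := funext hh
    rw [hfun]
    exact hsum.congr_deriv (by rw [hD]; ring)
  have hD0 : 0 ≤ D := by
    have := Real.rpow_pos_of_pos h1r (α - 1)
    have := Real.rpow_pos_of_pos h1r (2*β - 1)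
    have := Real.rpow_pos_of_pos h1r (γ - 1)
    rw [hD]; positivity
  set S := Real.sqrt (h r) with hS
  have hS0 : 0 < S := Real.sqrt_pos.mpr hhpos
  have hS2 : S ^ 2 = h r := Real.sq_sqrt hhpos.le
  -- derivative of y
  have hdy : HasDerivAt y (-(r ^ 2)⁻¹ + 1 / (2 * S) * D) r := by
    have hfun : y = fun x : ℝ => x⁻¹ + Real.sqrt (h x) := by
      funext x; rw [hy x, one_div]
    rw [hfun]
    exact (hasDerivAt_inv hr.ne').add ((Real.hasDerivAt_sqrt hhpos.ne').comp r hdh)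
  have hdyv : deriv y r = -(r ^ 2)⁻¹ + 1 / (2 * S) * D := hdy.deriv
  -- assemble
  set ir := r⁻¹ with hir
  have hir0 : 0 < ir := by positivity
  have hyr : y r = ir + S := by rw [hy r, one_div, hS]
  set K := Real.sqrt 2 * A₁ * P with hK
  have hK0 : 0 ≤ K := by positivity
  have hK2 : K ^ 2 = 2 * A₁ ^ 2 * P ^ 2 := by
    rw [hK]; rw [mul_pow, mul_pow, Real.sq_sqrt (by norm_num : (0:ℝ) ≤ 2)]
  have hS2' : S ^ 2 = B * Pa + 4 * Real.sqrt m * A₁ ^ 2 * P ^ 2 + 3 * A₁ ^ 2 * P ^ 2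
      + 2 * A₂ * Pg := by rw [hS2, hhr, hP2]; ring
  have h2SK : K ≤ 2 * S := by
    have hsq : K ^ 2 ≤ (2 * S) ^ 2 := by
      nlinarith [hS2', hsm, mul_pos hB hPa0, mul_pos hA₂ hPg0, sq_nonneg (A₁ * P),
        mul_pos hA₁ hP0]
    calc K = Real.sqrt (K ^ 2) := (Real.sqrt_sq hK0).symm
    _ ≤ Real.sqrt ((2 * S) ^ 2) := Real.sqrt_le_sqrt hsq
    _ = 2 * S := Real.sqrt_sq (by positivity)
  have hdlow : -(ir ^ 2) ≤ deriv y r := by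
    rw [hdyv, hir, inv_pow]
    have h2 : 0 ≤ 1 / (2 * S) * D := by positivity
    linarith
  clear_value Pa P P2 Pg D S ir K
  have hSK : S * K ≤ S ^ 2 / 2 + K ^ 2 / 2 := by linarith [two_mul_le_add_sq S K]
  have hirK : ir * K ≤ ir * (2 * S) := mul_le_mul_of_nonneg_left h2SK hir0.le
  rw [hyr, hP2]
  linarith [hdlow, hSK, hirK, hS2', hK2]


/-- the matrix supersolution inequality: for `y(r) = 1/r + √(h(r))` and any
complex `m×m` matrix `A` with `|u*(A+A*)u| ≤ √2·A₁·(1+r)^β` for all unit vectors `u`, the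
Hermitian matrix
`y'(r)·I + y(r)²·I + y(r)·(A+A*) − ((1/2)B(1+r)^α + (2√m+1/2)A₁²(1+r)^{2β} + A₂(1+r)^γ)·I`
is positive semidefinite. -/
theorem tamed_exhaustion_matrix_riccati_supersolution
    (m : ℕ) (hm : 1 ≤ m) (B A₁ A₂ α β γ : ℝ)
    (hB : 0 < B) (hA₁ : 0 < A₁) (hA₂ : 0 < A₂)
    (hα : 0 ≤ α) (hβ : 0 ≤ β) (hγ : 0 ≤ γ)
    (h y : ℝ → ℝ)
    (hh : ∀ r : ℝ, h r =
      B * (1 + r) ^ α + (4 * Real.sqrt m + 3) * A₁ ^ 2 * (1 + r) ^ (2 * β)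
        + 2 * A₂ * (1 + r) ^ γ)
    (hy : ∀ r : ℝ, y r = 1 / r + Real.sqrt (h r))
    (r : ℝ) (hr : 0 < r)
    (A : Matrix (Fin m) (Fin m) ℂ)
    (hA : ∀ u : Fin m → ℂ, star u ⬝ᵥ u = 1 →
      ‖star u ⬝ᵥ ((A + Aᴴ) *ᵥ u)‖ ≤ Real.sqrt 2 * A₁ * (1 + r) ^ β) :
    Matrix.PosSemidef
      (((deriv y r : ℝ) : ℂ) • (1 : Matrix (Fin m) (Fin m) ℂ)
        + (((y r) ^ 2 : ℝ) : ℂ) • (1 : Matrix (Fin m) (Fin m) ℂ)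
        + ((y r : ℝ) : ℂ) • (A + Aᴴ)
        - (((1 / 2) * B * (1 + r) ^ α + (2 * Real.sqrt m + 1 / 2) * A₁ ^ 2 * (1 + r) ^ (2 * β)
            + A₂ * (1 + r) ^ γ : ℝ) : ℂ) • (1 : Matrix (Fin m) (Fin m) ℂ)) := by
  set c : ℝ := (1 / 2) * B * (1 + r) ^ α + (2 * Real.sqrt m + 1 / 2) * A₁ ^ 2 * (1 + r) ^ (2 * β)
      + A₂ * (1 + r) ^ γ with hc
  set s : ℝ := deriv y r + (y r) ^ 2 - c with hs
  have hmat : (((deriv y r : ℝ) : ℂ) • (1 : Matrix (Fin m) (Fin m) ℂ)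
        + (((y r) ^ 2 : ℝ) : ℂ) • (1 : Matrix (Fin m) (Fin m) ℂ)
        + ((y r : ℝ) : ℂ) • (A + Aᴴ)
        - ((c : ℝ) : ℂ) • (1 : Matrix (Fin m) (Fin m) ℂ))
      = ((s : ℝ) : ℂ) • (1 : Matrix (Fin m) (Fin m) ℂ) + ((y r : ℝ) : ℂ) • (A + Aᴴ) := by
    rw [hs]
    push_cast
    module
  rw [hmat]
  have hyr0 : 0 ≤ y r := by
    rw [hy r]
    have : 0 < 1 / r := by positivity
    have := Real.sqrt_nonneg (h r)
    linarith
  have hK0 : (0:ℝ) ≤ Real.sqrt 2 * A₁ * (1 + r) ^ β := by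
    have : (0:ℝ) < 1 + r := by linarith
    positivity
  have hkey := key_ineq m hm B A₁ A₂ α β γ hB hA₁ hA₂ hα hβ hγ h y hh hy r hr
  exact aux_psd m (A + Aᴴ) (Matrix.isHermitian_add_transpose_self A)
    s (y r) (Real.sqrt 2 * A₁ * (1 + r) ^ β) hyr0 hK0
    (by rw [hs, hc]; linarith [hkey]) hA
end

section
/- Let n ≥ 1, let v, λ : ℝⁿ → ℝ (with ℝⁿ carrying the Euclidean inner product) be twice continuously differentiable on a neighborhood of a point p, and let ε > 0 be a real number with 1 − ε·v(p) > 0. Define φ(x) = (1 − ε·v(x))²·λ(x). If φ has a local maximum at p, then (1 − ε·v(p))²·Δλ(p) ≤ 6·ε²·λ(p)·‖∇v(p)‖² + 2·ε·(1 − ε·v(p))·λ(p)·Δv(p), where Δ denotes the Euclidean Laplacian (the trace of the Hessian) and ∇v(p) the gradient of v at p. -/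
open Filter Topology Set

lemma my_exists_open {F G : Type*} [NormedAddCommGroup F] [NormedSpace ℝ F]
    [NormedAddCommGroup G] [NormedSpace ℝ G] {f : F → G} {x : F}
    (h : ContDiffAt ℝ 2 f x) : ∃ s, IsOpen s ∧ x ∈ s ∧ ContDiffOn ℝ 2 f s := by
  obtain ⟨u, huo, hxu, hcd⟩ := h.contDiffOn' le_rfl (by simp)
  exact ⟨u, huo, hxu, by simpa using hcd⟩

lemma my_deriv_diffAt {a : ℝ → ℝ} (ha : ContDiffAt ℝ 2 a 0) :
    DifferentiableAt ℝ (deriv a) 0 := by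
  have h2 : DifferentiableAt ℝ (fderiv ℝ a) 0 :=
    (ha.fderiv_right (m := 1) (by norm_num)).differentiableAt one_ne_zero
  have h3 : deriv a = fun t => fderiv ℝ a t 1 := funext fun t => (fderiv_apply_one_eq_deriv).symm
  rw [h3]
  exact h2.clm_apply (differentiableAt_const _)

lemma my_oneDim {a b : ℝ → ℝ} (ha : ContDiffAt ℝ 2 a 0) (hb : ContDiffAt ℝ 2 b 0) (ε : ℝ) :
    deriv (fun t => (1 - ε * a t) ^ 2 * b t) 0
      = -(2*ε) * (1 - ε * a 0) * deriv a 0 * b 0 + (1 - ε * a 0) ^ 2 * deriv b 0 ∧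
    deriv (deriv (fun t => (1 - ε * a t) ^ 2 * b t)) 0
      = 2*ε^2*(deriv a 0)^2*(b 0) - 2*ε*(1-ε*a 0)*(deriv (deriv a) 0)*(b 0)
        - 4*ε*(1-ε*a 0)*(deriv a 0)*(deriv b 0) + (1-ε*a 0)^2*(deriv (deriv b) 0) := by
  have key : ∀ t : ℝ, DifferentiableAt ℝ a t → DifferentiableAt ℝ b t →
      HasDerivAt (fun s => (1 - ε * a s) ^ 2 * b s)
        (-(2*ε) * (1 - ε * a t) * deriv a t * b t + (1 - ε * a t) ^ 2 * deriv b t) t := by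
    intro t hat hbt
    have h1 : HasDerivAt (fun s => 1 - ε * a s) (-(ε * deriv a t)) t :=
      (hat.hasDerivAt.const_mul ε).const_sub 1
    have h2 := (h1.fun_pow 2).fun_mul hbt.hasDerivAt
    refine h2.congr_deriv ?_
    push_cast
    ring
  have da : DifferentiableAt ℝ a 0 := ha.differentiableAt two_ne_zero
  have db : DifferentiableAt ℝ b 0 := hb.differentiableAt two_ne_zero
  refine ⟨(key 0 da db).deriv, ?_⟩
  obtain ⟨sa, hsao, hsa0, hcda⟩ := my_exists_open ha
  obtain ⟨sb, hsbo, hsb0, hcdb⟩ := my_exists_open hb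
  have hev : (deriv (fun t => (1 - ε * a t) ^ 2 * b t)) =ᶠ[𝓝 (0:ℝ)]
      fun t => -(2*ε) * (1 - ε * a t) * deriv a t * b t + (1 - ε * a t) ^ 2 * deriv b t := by
    filter_upwards [hsao.mem_nhds hsa0, hsbo.mem_nhds hsb0] with t hta htb
    exact (key t (((hcda.differentiableOn (by norm_num)) t hta).differentiableAt
      (hsao.mem_nhds hta)) (((hcdb.differentiableOn (by norm_num)) t htb).differentiableAt
      (hsbo.mem_nhds htb))).deriv
  rw [hev.deriv_eq]
  have haD : HasDerivAt a (deriv a 0) 0 := da.hasDerivAt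
  have hbD : HasDerivAt b (deriv b 0) 0 := db.hasDerivAt
  have ha'D : HasDerivAt (deriv a) (deriv (deriv a) 0) 0 := (my_deriv_diffAt ha).hasDerivAt
  have hb'D : HasDerivAt (deriv b) (deriv (deriv b) 0) 0 := (my_deriv_diffAt hb).hasDerivAt
  have h1 : HasDerivAt (fun s => 1 - ε * a s) (-(ε * deriv a 0)) 0 :=
    (haD.const_mul ε).const_sub 1
  have hE := (((h1.const_mul (-(2*ε))).fun_mul ha'D).fun_mul hbD).fun_add ((h1.fun_pow 2).fun_mul hb'D)
  rw [hE.deriv]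
  push_cast
  ring
lemma my_secondDeriv_nonpos {g : ℝ → ℝ} (hg : ContDiffAt ℝ 2 g 0)
    (hmax : IsLocalMax g 0) : deriv (deriv g) 0 ≤ 0 := by
  by_contra hpos
  push_neg at hpos
  obtain ⟨s, hso, hs0, hcd⟩ := my_exists_open hg
  have hdiff : ∀ x ∈ s, DifferentiableAt ℝ g x := fun x hx =>
    ((hcd.differentiableOn (by norm_num)) x hx).differentiableAt (hso.mem_nhds hx)
  have hd0 : deriv g 0 = 0 := hmax.deriv_eq_zero
  have hder : HasDerivAt (deriv g) (deriv (deriv g) 0) 0 := (my_deriv_diffAt hg).hasDerivAt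
  rw [hasDerivAt_iff_tendsto_slope] at hder
  have hslope : ∀ᶠ t in 𝓝[≠] (0:ℝ), 0 < slope (deriv g) 0 t :=
    hder.eventually (eventually_gt_nhds hpos)
  have hne : 𝓝[>] (0:ℝ) ≤ 𝓝[≠] (0:ℝ) := nhdsWithin_mono 0 (fun t ht => ne_of_gt ht)
  have h1 : ∀ᶠ t in 𝓝[>] (0:ℝ), 0 < deriv g t ∧ t ∈ s ∧ g t ≤ g 0 := by
    filter_upwards [hslope.filter_mono hne,
      eventually_nhdsWithin_of_eventually_nhds (hso.mem_nhds hs0 : s ∈ 𝓝 (0:ℝ)),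
      eventually_nhdsWithin_of_eventually_nhds hmax, self_mem_nhdsWithin]
      with t h1 h2 h3 (h4 : (0:ℝ) < t)
    refine ⟨?_, h2, h3⟩
    have : slope (deriv g) 0 t = deriv g t / t := by
      simp [slope_def_field, hd0]
    rw [this] at h1
    exact (div_pos_iff.mp h1).elim (fun h => h.1) (fun h => absurd h4 (not_lt.mpr h.2.le))
  obtain ⟨δ, hδ, hsub⟩ := Metric.mem_nhdsWithin_iff.mp h1
  have hmem : ∀ t : ℝ, 0 < t → t < δ → 0 < deriv g t ∧ t ∈ s ∧ g t ≤ g 0 := by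
    intro t ht1 ht2
    exact hsub ⟨by simpa [abs_of_pos ht1] using ht2, ht1⟩
  have hmono : StrictMonoOn g (Icc 0 (δ/2)) := by
    apply strictMonoOn_of_deriv_pos (convex_Icc _ _)
    · intro t ht
      rcases eq_or_lt_of_le ht.1 with h | h
      · subst h; exact (hdiff 0 hs0).continuousAt.continuousWithinAt
      · exact (hdiff t (hmem t h (lt_of_le_of_lt ht.2 (by linarith))).2.1).continuousAt.continuousWithinAt
    · intro t ht
      rw [interior_Icc] at ht
      exact (hmem t ht.1 (lt_trans ht.2 (by linarith))).1
  have hlt : g 0 < g (δ/2) :=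
    hmono (by constructor <;> linarith) (by constructor <;> linarith) (by linarith)
  have hle : g (δ/2) ≤ g 0 := (hmem (δ/2) (by linarith) (by linarith)).2.2
  linarith

lemma my_line {F : Type*} [NormedAddCommGroup F] [NormedSpace ℝ F]
    {f : F → ℝ} {p : F} (hf : ContDiffAt ℝ 2 f p) (e : F) :
    ContDiffAt ℝ 2 (fun t : ℝ => f (p + t • e)) 0 ∧
    deriv (fun t : ℝ => f (p + t • e)) 0 = fderiv ℝ f p e ∧
    deriv (deriv (fun t : ℝ => f (p + t • e))) 0 = fderiv ℝ (fderiv ℝ f) p e e := by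
  have hp0 : p + (0:ℝ) • e = p := by simp
  have hlineC : ContDiff ℝ 2 (fun t : ℝ => p + t • e) :=
    contDiff_const.add (contDiff_id.smul contDiff_const)
  have hline_t : ∀ t : ℝ, HasDerivAt (fun s : ℝ => p + s • e) e t := fun t => by
    simpa using ((hasDerivAt_id t).smul_const e).const_add p
  have hf' : ContDiffAt ℝ 2 f (p + (0:ℝ) • e) := by rwa [hp0]
  refine ⟨hf'.comp 0 hlineC.contDiffAt, ?_, ?_⟩
  · have hd : DifferentiableAt ℝ f (p + (0:ℝ) • e) := hf'.differentiableAt two_ne_zero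
    have := (hd.hasFDerivAt.comp_hasDerivAt 0 (hline_t 0)).deriv
    rwa [hp0] at this
  · obtain ⟨s, hso, hs0, hcd⟩ := my_exists_open hf
    have hdiff : ∀ x ∈ s, DifferentiableAt ℝ f x := fun x hx =>
      ((hcd.differentiableOn (by norm_num)) x hx).differentiableAt (hso.mem_nhds hx)
    have hev : ∀ᶠ t in 𝓝 (0:ℝ), p + t • e ∈ s := by
      have hc : ContinuousAt (fun t : ℝ => p + t • e) 0 := hlineC.continuous.continuousAt
      have : s ∈ 𝓝 ((fun t : ℝ => p + t • e) 0) := by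
        simpa [hp0] using hso.mem_nhds hs0
      exact hc.eventually_mem this
    have hev2 : deriv (fun t : ℝ => f (p + t • e)) =ᶠ[𝓝 (0:ℝ)]
        fun t => fderiv ℝ f (p + t • e) e := by
      filter_upwards [hev] with t ht
      exact ((hdiff _ ht).hasFDerivAt.comp_hasDerivAt t (hline_t t)).deriv
    rw [hev2.deriv_eq]
    have hF : DifferentiableAt ℝ (fderiv ℝ f) (p + (0:ℝ) • e) := by
      rw [hp0]
      exact (hf.fderiv_right (m := 1) (by norm_num)).differentiableAt one_ne_zero
    have hFl := hF.hasFDerivAt.comp_hasDerivAt 0 (hline_t 0)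
    have h2 := (hFl.clm_apply (hasDerivAt_const 0 e)).deriv
    simp only [Function.comp_def] at h2
    rw [h2, hp0]
    simp


/-- The Euclidean Laplacian of `f : ℝⁿ → ℝ` at `p`: the trace of the second derivative,
i.e. the sum of the pure second directional derivatives along an orthonormal basis. -/
noncomputable def euclideanLaplacian {n : ℕ} (f : EuclideanSpace ℝ (Fin n) → ℝ)
    (p : EuclideanSpace ℝ (Fin n)) : ℝ :=
  ∑ i : Fin n,
    fderiv ℝ (fderiv ℝ f) p (EuclideanSpace.basisFun (Fin n) ℝ i)
      (EuclideanSpace.basisFun (Fin n) ℝ i)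

/-- second-order maximum-principle estimate: if `φ = (1 − εv)²·λ` (with `v`, `λ`
twice continuously differentiable near `p`, `ε > 0`, `1 − εv(p) > 0`) has a local maximum at
`p`, then `(1 − εv(p))²·Δλ(p) ≤ 6ε²λ(p)‖∇v(p)‖² + 2ε(1 − εv(p))λ(p)·Δv(p)`. -/
theorem laplacian_ineq_at_local_max_of_weighted_product
    (n : ℕ) (hn : 1 ≤ n) (v l : EuclideanSpace ℝ (Fin n) → ℝ)
    (p : EuclideanSpace ℝ (Fin n))
    (hv : ContDiffAt ℝ 2 v p) (hl : ContDiffAt ℝ 2 l p)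
    (ε : ℝ) (hε : 0 < ε) (hεv : 0 < 1 - ε * v p)
    (hmax : IsLocalMax (fun x => (1 - ε * v x) ^ 2 * l x) p) :
    (1 - ε * v p) ^ 2 * euclideanLaplacian l p ≤
      6 * ε ^ 2 * l p * ‖gradient v p‖ ^ 2
        + 2 * ε * (1 - ε * v p) * l p * euclideanLaplacian v p := by
  have hφ : ContDiffAt ℝ 2 (fun x => (1 - ε * v x) ^ 2 * l x) p :=
    ((contDiffAt_const.sub (contDiffAt_const.mul hv)).pow 2).mul hl
  have key : ∀ i : Fin n,
      (1 - ε * v p) ^ 2 *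
          (fderiv ℝ (fderiv ℝ l) p (EuclideanSpace.basisFun (Fin n) ℝ i)
            (EuclideanSpace.basisFun (Fin n) ℝ i)) ≤
        6 * ε ^ 2 * l p * (fderiv ℝ v p (EuclideanSpace.basisFun (Fin n) ℝ i)) ^ 2
          + 2 * ε * (1 - ε * v p) * l p *
            (fderiv ℝ (fderiv ℝ v) p (EuclideanSpace.basisFun (Fin n) ℝ i)
              (EuclideanSpace.basisFun (Fin n) ℝ i)) := by
    intro i
    set e' : EuclideanSpace ℝ (Fin n) := EuclideanSpace.basisFun (Fin n) ℝ i with he'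
    have hp0 : p + (0:ℝ) • e' = p := by simp
    obtain ⟨hva, hva1, hva2⟩ := my_line hv e'
    obtain ⟨hlb, hlb1, hlb2⟩ := my_line hl e'
    obtain ⟨hφg, hφg1, hφg2⟩ := my_line hφ e'
    -- transfer the local max to the line
    have hmaxline : IsLocalMax (fun t : ℝ => (1 - ε * v (p + t • e')) ^ 2 * l (p + t • e')) 0 := by
      have hg : Filter.Tendsto (fun t : ℝ => p + t • e') (𝓝 0) (𝓝 (p + (0:ℝ) • e')) :=
        ((continuous_const.add (continuous_id.smul continuous_const)).tendsto 0)
      have h1 : IsLocalMax (fun x => (1 - ε * v x) ^ 2 * l x) (p + (0:ℝ) • e') := by rwa [hp0]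
      have h2 := IsMaxFilter.comp_tendsto (g := fun t : ℝ => p + t • e') (b := (0:ℝ)) h1 hg
      exact h2
    have hφgC : ContDiffAt ℝ 2
        (fun t : ℝ => (1 - ε * v (p + t • e')) ^ 2 * l (p + t • e')) 0 := hφg
    have hd0 : deriv (fun t : ℝ => (1 - ε * v (p + t • e')) ^ 2 * l (p + t • e')) 0 = 0 :=
      hmaxline.deriv_eq_zero
    have hd2 : deriv (deriv (fun t : ℝ => (1 - ε * v (p + t • e')) ^ 2 * l (p + t • e'))) 0 ≤ 0 :=
      my_secondDeriv_nonpos hφgC hmaxline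
    obtain ⟨hC1, hC2⟩ := my_oneDim (a := fun t : ℝ => v (p + t • e'))
      (b := fun t : ℝ => l (p + t • e')) hva hlb ε
    simp only [hp0] at hC1 hC2
    rw [hva1, hlb1] at hC1
    rw [hva1, hva2, hlb1, hlb2] at hC2
    have e1 : (0:ℝ) = -(2*ε) * (1 - ε * v p) * (fderiv ℝ v p e') * l p
        + (1 - ε * v p) ^ 2 * (fderiv ℝ l p e') := hd0 ▸ hC1
    have i2 : 2*ε^2*(fderiv ℝ v p e')^2*(l p)
        - 2*ε*(1-ε*v p)*(fderiv ℝ (fderiv ℝ v) p e' e')*(l p)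
        - 4*ε*(1-ε*v p)*(fderiv ℝ v p e')*(fderiv ℝ l p e')
        + (1-ε*v p)^2*(fderiv ℝ (fderiv ℝ l) p e' e') ≤ 0 := hC2 ▸ hd2
    have hw : (1 - ε * v p) ≠ 0 := ne_of_gt hεv
    have h2 : (1 - ε * v p) * ((1 - ε * v p) * (fderiv ℝ l p e')
        - 2 * ε * (fderiv ℝ v p e') * l p) = 0 := by linear_combination -e1
    have hli : (1 - ε * v p) * (fderiv ℝ l p e') = 2 * ε * (fderiv ℝ v p e') * l p := by
      rcases mul_eq_zero.mp h2 with h | h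
      · exact absurd h hw
      · linarith [h]
    have h4 : 4 * ε * (fderiv ℝ v p e') * ((1 - ε * v p) * (fderiv ℝ l p e'))
        = 4 * ε * (fderiv ℝ v p e') * (2 * ε * (fderiv ℝ v p e') * l p) := by rw [hli]
    nlinarith [i2, h4]
  have hsum : ∑ i : Fin n, (fderiv ℝ v p (EuclideanSpace.basisFun (Fin n) ℝ i)) ^ 2
      = ‖gradient v p‖ ^ 2 := by
    have hpar := OrthonormalBasis.sum_inner_mul_inner (EuclideanSpace.basisFun (Fin n) ℝ)
      (gradient v p) (gradient v p)
    rw [real_inner_self_eq_norm_sq] at hpar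
    rw [← hpar]
    refine Finset.sum_congr rfl fun i _ => ?_
    have hgi : fderiv ℝ v p (EuclideanSpace.basisFun (Fin n) ℝ i)
        = @inner ℝ _ _ (gradient v p) (EuclideanSpace.basisFun (Fin n) ℝ i) := by
      rw [gradient]
      exact (InnerProductSpace.toDual_symm_apply).symm
    rw [hgi, sq, real_inner_comm (gradient v p)]
  calc (1 - ε * v p) ^ 2 * euclideanLaplacian l p
      = ∑ i : Fin n, (1 - ε * v p) ^ 2 *
          (fderiv ℝ (fderiv ℝ l) p (EuclideanSpace.basisFun (Fin n) ℝ i)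
            (EuclideanSpace.basisFun (Fin n) ℝ i)) := by
        simp only [euclideanLaplacian, Finset.mul_sum]
    _ ≤ ∑ i : Fin n,
          (6 * ε ^ 2 * l p * (fderiv ℝ v p (EuclideanSpace.basisFun (Fin n) ℝ i)) ^ 2
            + 2 * ε * (1 - ε * v p) * l p *
              (fderiv ℝ (fderiv ℝ v) p (EuclideanSpace.basisFun (Fin n) ℝ i)
                (EuclideanSpace.basisFun (Fin n) ℝ i))) := Finset.sum_le_sum fun i _ => key i
    _ = 6 * ε ^ 2 * l p * ‖gradient v p‖ ^ 2
        + 2 * ε * (1 - ε * v p) * l p * euclideanLaplacian v p := by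
        rw [Finset.sum_add_distrib, ← Finset.mul_sum, ← Finset.mul_sum, hsum]
        simp only [euclideanLaplacian]
end
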